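/- Let m, k be integers with 1 ≤ k < m, and let ḡ_{(m,k)} be the associated function on 𝔽_3^m. Then, as integers: (a) for u ∈ 𝔽_3 \ {0} and v ∈ 𝔽_3^m with wt(v) = i ≥ 1, the Hamming weight of the codeword c_{u,v} of C_{ḡ_{(m,k)}} equals 3^m - 3^{m-1} - Ψ_k(i, m); (b) for u ∈ 𝔽_3 \ {0} and v = 0, the Hamming weight of c_{u,0} equals 3^m - Σ_{j=0}^{k} 2^j·C(m, j); (c) for u = 0 and v ≠ 0, the Hamming weight of c_{0,v} equals 3^m - 3^{m-1}. -/

import Mathlib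

open Finset

/-- The function `ḡ_{(m,k)} : 𝔽_3^m → 𝔽_3`: `1` if `wt(x) > k`, `0` if `wt(x) ≤ k`. -/
def gbar {m : ℕ} (k : ℕ) (x : Fin m → ZMod 3) : ZMod 3 :=
  if k < hammingNorm x then 1 else 0

/-- The ternary Krawtchouk polynomial
`K_t(i,m) = Σ_{j=0}^{t} (-1)^j·2^{t-j}·C(i,j)·C(m-i,t-j)`. -/
def kraw (t i m : ℕ) : ℤ :=
  ∑ j ∈ Finset.range (t + 1),
    (-1 : ℤ) ^ j * 2 ^ (t - j) * (i.choose j : ℤ) * ((m - i).choose (t - j) : ℤ)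

/-- The Lloyd polynomial `Ψ_k(i,m) = Σ_{t=0}^{k} K_t(i,m)`. -/
def lloyd (k i m : ℕ) : ℤ := ∑ t ∈ Finset.range (k + 1), kraw t i m

/-- The Hamming weight of the codeword `c_{u,v}` of the code `C_h`, i.e. the number
of `x ∈ 𝔽_3^m \ {0}` with `u·h(x) + v·x ≠ 0`. -/
def cwWeight {m : ℕ} (h : (Fin m → ZMod 3) → ZMod 3)
    (u : ZMod 3) (v : Fin m → ZMod 3) : ℕ :=
  (Finset.univ.filter fun x : Fin m → ZMod 3 =>
    x ≠ 0 ∧ u * h x + ∑ j, v j * x j ≠ 0).card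


lemma kraw_zero (i m : ℕ) : kraw 0 i m = 1 := by simp [kraw]

lemma kraw_i_zero (t m : ℕ) : kraw t 0 m = 2 ^ t * (m.choose t : ℤ) := by
  unfold kraw
  rw [Finset.sum_range_succ']
  simp [Nat.choose_zero_succ]

lemma kraw_R1 {i m : ℕ} (hi : i ≤ m) (t : ℕ) :
    kraw (t+1) i (m+1) = kraw (t+1) i m + 2 * kraw t i m := by
  unfold kraw
  rw [Finset.sum_range_succ, Finset.sum_range_succ (n := t+1)]
  have h1 : ∀ j ∈ Finset.range (t+1),
      (-1 : ℤ) ^ j * 2 ^ (t + 1 - j) * (i.choose j : ℤ) * (((m+1) - i).choose (t + 1 - j) : ℤ)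
        = (-1 : ℤ) ^ j * 2 ^ (t + 1 - j) * (i.choose j : ℤ) * ((m - i).choose (t + 1 - j) : ℤ)
          + 2 * ((-1 : ℤ) ^ j * 2 ^ (t - j) * (i.choose j : ℤ) * ((m - i).choose (t - j) : ℤ)) := by
    intro j hj
    rw [Finset.mem_range] at hj
    have hj' : j ≤ t := by omega
    have e1 : t + 1 - j = (t - j) + 1 := by omega
    have e2 : m + 1 - i = (m - i) + 1 := by omega
    rw [e1, e2, Nat.choose_succ_succ]
    have e3 : 2 ^ (t - j + 1) = (2:ℤ) * 2 ^ (t - j) := by ring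
    push_cast
    ring
  rw [Finset.sum_congr rfl h1, Finset.sum_add_distrib, ← Finset.mul_sum]
  have e4 : t + 1 - (t + 1) = 0 := by omega
  rw [e4]
  simp
  ring

lemma kraw_R2 {i m : ℕ} (hi : i ≤ m) (t : ℕ) :
    kraw (t+1) (i+1) (m+1) = kraw (t+1) i m - kraw t i m := by
  unfold kraw
  rw [Finset.sum_range_succ' _ (t+1), Finset.sum_range_succ' _ (t+1)]
  have h1 : ∀ j ∈ Finset.range (t+1),
      (-1 : ℤ) ^ (j+1) * 2 ^ (t + 1 - (j+1)) * ((i+1).choose (j+1) : ℤ)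
          * (((m+1) - (i+1)).choose (t + 1 - (j+1)) : ℤ)
        = (-1 : ℤ) ^ (j+1) * 2 ^ (t + 1 - (j+1)) * (i.choose (j+1) : ℤ)
            * ((m - i).choose (t + 1 - (j+1)) : ℤ)
          - (-1 : ℤ) ^ j * 2 ^ (t - j) * (i.choose j : ℤ) * ((m - i).choose (t - j) : ℤ) := by
    intro j hj
    have e1 : t + 1 - (j + 1) = t - j := by omega
    have e2 : m + 1 - (i + 1) = m - i := by omega
    rw [e1, e2, Nat.choose_succ_succ]
    push_cast
    ring
  rw [Finset.sum_congr rfl h1, Finset.sum_sub_distrib]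
  have e2 : m + 1 - (i + 1) = m - i := by omega
  rw [e2]
  simp
  ring

lemma hn_sum {m : ℕ} (x : Fin m → ZMod 3) :
    hammingNorm x = ∑ i, if x i = 0 then 0 else 1 := by
  rw [hammingNorm, Finset.card_filter]; simp

lemma hn_cons {m : ℕ} (b : ZMod 3) (x : Fin m → ZMod 3) :
    hammingNorm (Fin.cons b x : Fin (m+1) → ZMod 3)
      = (if b = 0 then 0 else 1) + hammingNorm x := by
  rw [hn_sum, hn_sum, Fin.sum_univ_succ]; simp

lemma card_filter_succ {m : ℕ} (P : (Fin (m+1) → ZMod 3) → Prop) [DecidablePred P] :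
    (univ.filter P).card
      = ∑ b : ZMod 3, (univ.filter fun x : Fin m → ZMod 3 => P (Fin.cons b x)).card := by
  simp_rw [Finset.card_filter]
  rw [← Fintype.sum_equiv (Fin.consEquiv fun _ : Fin (m+1) => ZMod 3)
    (fun p => if P (Fin.cons p.1 p.2) then 1 else 0) (fun y => if P y then 1 else 0)
    (fun p => rfl)]
  rw [Fintype.sum_prod_type]

lemma zmod3_sum {M : Type*} [AddCommMonoid M] (f : ZMod 3 → M) :
    ∑ b, f b = f 0 + f 1 + f 2 := by
  have h : (univ : Finset (ZMod 3)) = {0, 1, 2} := by decide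
  rw [h, Finset.sum_insert (by decide), Finset.sum_insert (by decide), Finset.sum_singleton,
    add_assoc]

def Na (m t : ℕ) (v : Fin m → ZMod 3) (a : ZMod 3) : ℕ :=
  (univ.filter fun x : Fin m → ZMod 3 => hammingNorm x = t ∧ ∑ j, v j * x j = a).card

lemma Na_zero (m : ℕ) (v : Fin m → ZMod 3) (a : ZMod 3) :
    Na m 0 v a = if a = 0 then 1 else 0 := by
  have hset : (univ.filter fun x : Fin m → ZMod 3 => hammingNorm x = 0 ∧ ∑ j, v j * x j = a)
      = if a = 0 then {0} else ∅ := by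
    split_ifs with h
    · subst h
      ext x
      simp only [Finset.mem_filter, Finset.mem_univ, true_and, Finset.mem_singleton,
        hammingNorm_eq_zero]
      constructor
      · exact fun hx => hx.1
      · rintro rfl; simp
    · ext x
      simp only [Finset.mem_filter, Finset.mem_univ, true_and, Finset.notMem_empty,
        iff_false, hammingNorm_eq_zero, not_and]
      rintro rfl hx
      apply h
      rw [← hx]; simp
  rw [Na, hset]
  split_ifs <;> simp

lemma Na_succ (m t : ℕ) (v : Fin (m+1) → ZMod 3) (a : ZMod 3) :
    Na (m+1) t v a = ∑ b : ZMod 3, (univ.filter fun x : Fin m → ZMod 3 =>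
      (if b = 0 then 0 else 1) + hammingNorm x = t
        ∧ v 0 * b + ∑ j, Fin.tail v j * x j = a).card := by
  rw [Na, card_filter_succ]
  refine Finset.sum_congr rfl fun b _ => ?_
  congr 1
  ext x
  simp only [Finset.mem_filter, Finset.mem_univ, true_and]
  simp [hn_cons, Fin.sum_univ_succ, Fin.tail]

lemma filt_b (m t' : ℕ) (v' : Fin m → ZMod 3) (c b a : ZMod 3) :
    (univ.filter fun x : Fin m → ZMod 3 =>
      1 + hammingNorm x = t' + 1 ∧ c * b + ∑ j, v' j * x j = a).card
      = Na m t' v' (a - c * b) := by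
  rw [Na]
  congr 1
  ext x
  simp only [Finset.mem_filter, Finset.mem_univ, true_and]
  constructor
  · rintro ⟨h1, h2⟩
    refine ⟨by omega, ?_⟩
    rw [← h2]; ring
  · rintro ⟨h1, h2⟩
    refine ⟨by omega, ?_⟩
    rw [h2]; ring

lemma key : ∀ (m : ℕ) (v : Fin m → ZMod 3) (t : ℕ),
    (Na m t v 0 : ℤ) - (Na m t v 1 : ℤ) = kraw t (hammingNorm v) m := by
  intro m
  induction m with
  | zero =>
    intro v t
    have hv : v = 0 := funext fun x => x.elim0
    subst hv
    cases t with
    | zero => rw [Na_zero, Na_zero, kraw_zero]; simp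
    | succ s =>
      have hNa : ∀ a, Na 0 (s+1) (0 : Fin 0 → ZMod 3) a = 0 := by
        intro a
        rw [Na, Finset.card_eq_zero, Finset.filter_eq_empty_iff]
        intro x _
        have hx : hammingNorm x = 0 := by
          rw [hammingNorm_eq_zero]; funext i; exact i.elim0
        simp [hx]
      rw [hNa, hNa, show hammingNorm (0 : Fin 0 → ZMod 3) = 0 from hammingNorm_zero,
        kraw_i_zero]
      simp
  | succ m ih =>
    intro v t
    cases t with
    | zero => rw [Na_zero, Na_zero, kraw_zero]; simp
    | succ t =>
      have him : hammingNorm (Fin.tail v) ≤ m :=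
        le_trans hammingNorm_le_card_fintype (by simp)
      have hsplit : ∀ a : ZMod 3, (Na (m+1) (t+1) v a : ℤ)
          = Na m (t+1) (Fin.tail v) a + Na m t (Fin.tail v) (a - v 0 * 1)
            + Na m t (Fin.tail v) (a - v 0 * 2) := by
        intro a
        rw [Na_succ, zmod3_sum]
        have h0 : (univ.filter fun x : Fin m → ZMod 3 =>
            (if (0:ZMod 3) = 0 then 0 else 1) + hammingNorm x = t+1
              ∧ v 0 * 0 + ∑ j, Fin.tail v j * x j = a).card = Na m (t+1) (Fin.tail v) a := by
          rw [Na]; congr 1; ext x; simp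
        have h1 : (univ.filter fun x : Fin m → ZMod 3 =>
            (if (1:ZMod 3) = 0 then 0 else 1) + hammingNorm x = t+1
              ∧ v 0 * 1 + ∑ j, Fin.tail v j * x j = a).card
            = Na m t (Fin.tail v) (a - v 0 * 1) := by
          simp only [if_neg (show ¬(1:ZMod 3) = 0 by decide)]
          exact filt_b m t (Fin.tail v) (v 0) 1 a
        have h2 : (univ.filter fun x : Fin m → ZMod 3 =>
            (if (2:ZMod 3) = 0 then 0 else 1) + hammingNorm x = t+1
              ∧ v 0 * 2 + ∑ j, Fin.tail v j * x j = a).card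
            = Na m t (Fin.tail v) (a - v 0 * 2) := by
          simp only [if_neg (show ¬(2:ZMod 3) = 0 by decide)]
          exact filt_b m t (Fin.tail v) (v 0) 2 a
        rw [h0, h1, h2]
        push_cast
        ring
      have hnv : hammingNorm v = (if v 0 = 0 then 0 else 1) + hammingNorm (Fin.tail v) := by
        conv_lhs => rw [← Fin.cons_self_tail v]
        rw [hn_cons]
      have hcase : v 0 = 0 ∨ v 0 = 1 ∨ v 0 = 2 := by
        have : ∀ w : ZMod 3, w = 0 ∨ w = 1 ∨ w = 2 := by decide
        exact this (v 0)
      rcases hcase with h | h | h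
      · have hi0 : hammingNorm v = hammingNorm (Fin.tail v) := by rw [hnv, h]; simp
        have s0 := hsplit 0
        have s1 := hsplit 1
        simp only [h, zero_mul, sub_zero] at s0 s1
        rw [hi0, kraw_R1 him]
        have i1 := ih (Fin.tail v) (t+1)
        have i2 := ih (Fin.tail v) t
        linarith
      · have hi1 : hammingNorm v = hammingNorm (Fin.tail v) + 1 := by
          rw [hnv, h, if_neg (show ¬(1:ZMod 3) = 0 by decide)]; omega
        have s0 := hsplit 0
        have s1 := hsplit 1
        simp only [h] at s0 s1
        rw [show (0:ZMod 3) - 1 * 1 = 2 from by decide,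
          show (0:ZMod 3) - 1 * 2 = 1 from by decide] at s0
        rw [show (1:ZMod 3) - 1 * 1 = 0 from by decide,
          show (1:ZMod 3) - 1 * 2 = 2 from by decide] at s1
        rw [hi1, kraw_R2 him]
        have i1 := ih (Fin.tail v) (t+1)
        have i2 := ih (Fin.tail v) t
        linarith
      · have hi1 : hammingNorm v = hammingNorm (Fin.tail v) + 1 := by
          rw [hnv, h, if_neg (show ¬(2:ZMod 3) = 0 by decide)]; omega
        have s0 := hsplit 0
        have s1 := hsplit 1
        simp only [h] at s0 s1
        rw [show (0:ZMod 3) - 2 * 1 = 1 from by decide,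
          show (0:ZMod 3) - 2 * 2 = 2 from by decide] at s0
        rw [show (1:ZMod 3) - 2 * 1 = 2 from by decide,
          show (1:ZMod 3) - 2 * 2 = 0 from by decide] at s1
        rw [hi1, kraw_R2 him]
        have i1 := ih (Fin.tail v) (t+1)
        have i2 := ih (Fin.tail v) t
        linarith


lemma count_neg {m : ℕ} (v : Fin m → ZMod 3) (p : ℕ → Prop) [DecidablePred p] (a : ZMod 3) :
    (univ.filter fun x : Fin m → ZMod 3 => p (hammingNorm x) ∧ ∑ j, v j * x j = a).card
      = (univ.filter fun x : Fin m → ZMod 3 => p (hammingNorm x) ∧ ∑ j, v j * x j = -a).card := by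
  have hn : ∀ y : Fin m → ZMod 3, hammingNorm (-y) = hammingNorm y := by
    intro y
    simp [hn_sum, neg_eq_zero]
  refine Finset.card_bij' (fun x _ => -x) (fun x _ => -x) ?_ ?_
    (fun x _ => neg_neg x) (fun x _ => neg_neg x)
  · intro x hx
    simp only [Finset.mem_filter, Finset.mem_univ, true_and] at hx ⊢
    refine ⟨by rw [hn]; exact hx.1, ?_⟩
    rw [show ∑ j, v j * (-x) j = -∑ j, v j * x j by simp [mul_neg], hx.2]
  · intro x hx
    simp only [Finset.mem_filter, Finset.mem_univ, true_and] at hx ⊢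
    refine ⟨by rw [hn]; exact hx.1, ?_⟩
    rw [show ∑ j, v j * (-x) j = -∑ j, v j * x j by simp [mul_neg], hx.2, neg_neg]

lemma card_partition_val {m : ℕ} (P : (Fin m → ZMod 3) → Prop) [DecidablePred P]
    (v : Fin m → ZMod 3) :
    (univ.filter P).card
      = ∑ a : ZMod 3, (univ.filter fun x => P x ∧ ∑ j, v j * x j = a).card := by
  simp_rw [Finset.card_filter]
  rw [Finset.sum_comm]
  refine Finset.sum_congr rfl fun x _ => ?_
  by_cases h : P x
  · simp [h, Finset.sum_ite_eq]
  · simp [h]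

lemma card_wt_le {m k : ℕ} (Q : (Fin m → ZMod 3) → Prop) [DecidablePred Q] :
    (univ.filter fun x : Fin m → ZMod 3 => hammingNorm x ≤ k ∧ Q x).card
      = ∑ t ∈ Finset.range (k+1),
          (univ.filter fun x : Fin m → ZMod 3 => hammingNorm x = t ∧ Q x).card := by
  simp_rw [Finset.card_filter]
  rw [Finset.sum_comm]
  refine Finset.sum_congr rfl fun x _ => ?_
  by_cases h : Q x
  · simp only [h, and_true]
    rw [Finset.sum_ite_eq (Finset.range (k+1)) (hammingNorm x) (fun _ => 1)]
    simp [Finset.mem_range, Nat.lt_succ_iff]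
  · simp [h]

lemma card_univ_fun (m : ℕ) : (univ : Finset (Fin m → ZMod 3)).card = 3 ^ m := by
  rw [Finset.card_univ]
  simp [Fintype.card_fun]


lemma card_dot_eq {m : ℕ} (hm : 1 ≤ m) (v : Fin m → ZMod 3) (hv : v ≠ 0) (a : ZMod 3) :
    (univ.filter fun x : Fin m → ZMod 3 => ∑ j, v j * x j = a).card = 3 ^ (m-1) := by
  obtain ⟨j0, hj0⟩ := Function.ne_iff.mp hv
  rw [Pi.zero_apply] at hj0
  have hdot : ∀ b : ZMod 3,
      ∑ i, v i * (if i = j0 then b * (v j0)⁻¹ else 0) = b := by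
    intro b
    rw [Finset.sum_eq_single j0]
    · rw [if_pos rfl, mul_comm b, ← mul_assoc, mul_inv_cancel₀ hj0, one_mul]
    · intro i _ hi; rw [if_neg hi, mul_zero]
    · intro h; exact absurd (Finset.mem_univ j0) h
  have Tconst : ∀ b : ZMod 3,
      (univ.filter fun x : Fin m → ZMod 3 => ∑ j, v j * x j = b).card
        = (univ.filter fun x : Fin m → ZMod 3 => ∑ j, v j * x j = 0).card := by
    intro b
    set x₁ : Fin m → ZMod 3 := fun i => if i = j0 then b * (v j0)⁻¹ else 0 with hx₁
    refine Finset.card_bij' (fun x _ => x - x₁) (fun y _ => y + x₁) ?_ ?_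
      (fun x _ => by ring) (fun y _ => by ring)
    · intro x hx
      simp only [Finset.mem_filter, Finset.mem_univ, true_and] at hx ⊢
      rw [show ∑ j, v j * (x - x₁) j = (∑ j, v j * x j) - ∑ j, v j * x₁ j by
        rw [← Finset.sum_sub_distrib]; exact Finset.sum_congr rfl fun i _ => by
          simp [mul_sub]]
      rw [hx, hx₁, hdot b, sub_self]
    · intro y hy
      simp only [Finset.mem_filter, Finset.mem_univ, true_and] at hy ⊢
      rw [show ∑ j, v j * (y + x₁) j = (∑ j, v j * x₁ j) + ∑ j, v j * y j by
        rw [← Finset.sum_add_distrib]; exact Finset.sum_congr rfl fun i _ => by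
          simp [mul_add]; ring]
      rw [hy, hx₁, hdot b, add_zero]
  have hpart : (3:ℕ) ^ m = ∑ b : ZMod 3,
      (univ.filter fun x : Fin m → ZMod 3 => ∑ j, v j * x j = b).card := by
    simp_rw [Finset.card_filter]
    rw [Finset.sum_comm]
    have hx : ∀ x : Fin m → ZMod 3,
        ∑ b : ZMod 3, (if ∑ j, v j * x j = b then (1:ℕ) else 0) = 1 := fun x => by
      simp [Finset.sum_ite_eq]
    simp_rw [hx]
    rw [Finset.sum_const, card_univ_fun]
    simp
  rw [zmod3_sum, Tconst 1, Tconst 2] at hpart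
  have h3 : (3:ℕ) ^ m = 3 * 3 ^ (m - 1) := by
    cases m with
    | zero => omega
    | succ n => rw [pow_succ, Nat.succ_sub_one]; ring
  have ha := Tconst a
  linarith [hpart, h3, ha]


lemma fcomm {m : ℕ} (p q : (Fin m → ZMod 3) → Prop) [DecidablePred p] [DecidablePred q] :
    (univ.filter fun x => p x ∧ q x) = univ.filter fun x => q x ∧ p x := by
  ext x; simp [and_comm]

lemma card_wt_eq (m t : ℕ) :
    (((univ.filter fun x : Fin m → ZMod 3 => hammingNorm x = t).card : ℤ))
      = 2 ^ t * (m.choose t : ℤ) := by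
  have h0 : (univ.filter fun x : Fin m → ZMod 3 => hammingNorm x = t).card
      = Na m t (0 : Fin m → ZMod 3) 0 := by
    rw [Na]; congr 1; ext x; simp
  have h1 : Na m t (0 : Fin m → ZMod 3) 1 = 0 := by
    rw [Na, Finset.card_eq_zero, Finset.filter_eq_empty_iff]
    intro x _
    simp
  have hk := key m (0 : Fin m → ZMod 3) t
  rw [h1, hammingNorm_zero, kraw_i_zero] at hk
  rw [h0]
  push_cast at hk ⊢
  linarith

lemma card_wt_le_eq (m k : ℕ) :
    ((univ.filter fun x : Fin m → ZMod 3 => hammingNorm x ≤ k).card : ℤ)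
      = ∑ j ∈ Finset.range (k+1), 2 ^ j * (m.choose j : ℤ) := by
  have h : (univ.filter fun x : Fin m → ZMod 3 => hammingNorm x ≤ k)
      = univ.filter fun x : Fin m → ZMod 3 => hammingNorm x ≤ k ∧ True := by simp
  rw [h, card_wt_le]
  push_cast
  refine Finset.sum_congr rfl fun t _ => ?_
  rw [← card_wt_eq m t]
  congr 2
  ext x; simp

/-- For `1 ≤ k < m`, in the code `C_{ḡ_{(m,k)}}`:
(a) for `u ≠ 0` and `wt(v) = i ≥ 1`, `wt(c_{u,v}) = 3^m - 3^{m-1} - Ψ_k(i,m)`;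
(b) for `u ≠ 0`, `wt(c_{u,0}) = 3^m - Σ_{j=0}^{k} 2^j·C(m,j)`;
(c) for `v ≠ 0`, `wt(c_{0,v}) = 3^m - 3^{m-1}`. -/
theorem stmt_15 (m k : ℕ) (hk1 : 1 ≤ k) (hkm : k < m) :
    (∀ u : ZMod 3, u ≠ 0 → ∀ (v : Fin m → ZMod 3) (i : ℕ), hammingNorm v = i → 1 ≤ i →
      (cwWeight (gbar (m := m) k) u v : ℤ) = 3 ^ m - 3 ^ (m - 1) - lloyd k i m)
    ∧ (∀ u : ZMod 3, u ≠ 0 →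
      (cwWeight (gbar (m := m) k) u 0 : ℤ)
        = 3 ^ m - ∑ j ∈ Finset.range (k + 1), 2 ^ j * (m.choose j : ℤ))
    ∧ (∀ v : Fin m → ZMod 3, v ≠ 0 →
      (cwWeight (gbar (m := m) k) 0 v : ℤ) = 3 ^ m - 3 ^ (m - 1))     := by
  have hm1 : 1 ≤ m := by omega
  have h3m : (3:ℤ) ^ m = 3 * 3 ^ (m-1) := by
    cases m with
    | zero => omega
    | succ n => rw [pow_succ, Nat.succ_sub_one]; ring
  refine ⟨?_, ?_, ?_⟩
  · -- part (a)
    intro u hu v i hvi hi1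
    subst hvi
    have hvne : v ≠ 0 := by
      intro h
      rw [h, hammingNorm_zero] at hi1
      omega
    have him : hammingNorm v ≤ m := le_trans hammingNorm_le_card_fintype (by simp)
    have hiff : ∀ x ∈ (univ : Finset (Fin m → ZMod 3)),
        (x ≠ 0 ∧ u * gbar k x + ∑ j, v j * x j ≠ 0)
          ↔ ¬ (u * gbar k x + ∑ j, v j * x j = 0) := by
      intro x _
      constructor
      · exact fun h => h.2
      · intro h
        refine ⟨?_, h⟩
        rintro rfl
        apply h
        simp [gbar, hammingNorm_zero]
    rw [cwWeight, Finset.filter_congr hiff]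
    have hZ : (univ.filter fun x : Fin m → ZMod 3 =>
          u * gbar k x + ∑ j, v j * x j = 0).card
        + (univ.filter fun x : Fin m → ZMod 3 =>
          ¬ (u * gbar k x + ∑ j, v j * x j = 0)).card = 3 ^ m := by
      rw [Finset.card_filter_add_card_filter_not, card_univ_fun]
    have e1 : (univ.filter fun x : Fin m → ZMod 3 =>
          (u * gbar k x + ∑ j, v j * x j = 0) ∧ hammingNorm x ≤ k)
        = univ.filter fun x : Fin m → ZMod 3 =>
          hammingNorm x ≤ k ∧ ∑ j, v j * x j = 0 := by
      apply Finset.filter_congr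
      intro x _
      constructor
      · rintro ⟨h1, h2⟩
        simp only [gbar] at h1
        rw [if_neg (not_lt.mpr h2), mul_zero, zero_add] at h1
        exact ⟨h2, h1⟩
      · rintro ⟨h1, h2⟩
        simp only [gbar]
        rw [if_neg (not_lt.mpr h1), mul_zero, zero_add]
        exact ⟨h2, h1⟩
    have e2 : (univ.filter fun x : Fin m → ZMod 3 =>
          (u * gbar k x + ∑ j, v j * x j = 0) ∧ ¬ (hammingNorm x ≤ k))
        = univ.filter fun x : Fin m → ZMod 3 =>
          ¬ (hammingNorm x ≤ k) ∧ ∑ j, v j * x j = -u := by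
      apply Finset.filter_congr
      intro x _
      constructor
      · rintro ⟨h1, h2⟩
        simp only [gbar] at h1
        rw [if_pos (not_le.mp h2), mul_one] at h1
        exact ⟨h2, eq_neg_of_add_eq_zero_right h1⟩
      · rintro ⟨h1, h2⟩
        simp only [gbar]
        rw [if_pos (not_le.mp h1), mul_one, h2]
        exact ⟨add_neg_cancel u, h1⟩
    have hsplitZ : (univ.filter fun x : Fin m → ZMod 3 =>
          u * gbar k x + ∑ j, v j * x j = 0).card
        = (univ.filter fun x : Fin m → ZMod 3 =>
            hammingNorm x ≤ k ∧ ∑ j, v j * x j = 0).card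
          + (univ.filter fun x : Fin m → ZMod 3 =>
            ¬ (hammingNorm x ≤ k) ∧ ∑ j, v j * x j = -u).card := by
      rw [← Finset.card_filter_add_card_filter_not
          (s := univ.filter fun x : Fin m → ZMod 3 =>
            u * gbar k x + ∑ j, v j * x j = 0)
          (p := fun x => hammingNorm x ≤ k), Finset.filter_filter, Finset.filter_filter,
        e1, e2]
    have hA12 := count_neg v (fun n => n ≤ k) 1
    rw [show -(1 : ZMod 3) = 2 from by decide] at hA12
    have hB12 := count_neg v (fun n => ¬ (n ≤ k)) 1
    rw [show -(1 : ZMod 3) = 2 from by decide] at hB12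
    have hAB0 : (univ.filter fun x : Fin m → ZMod 3 =>
          hammingNorm x ≤ k ∧ ∑ j, v j * x j = 0).card
        + (univ.filter fun x : Fin m → ZMod 3 =>
          ¬ (hammingNorm x ≤ k) ∧ ∑ j, v j * x j = 0).card = 3 ^ (m-1) := by
      rw [← card_dot_eq hm1 v hvne 0,
        ← Finset.card_filter_add_card_filter_not
          (s := univ.filter fun x : Fin m → ZMod 3 => ∑ j, v j * x j = 0)
          (p := fun x => hammingNorm x ≤ k), Finset.filter_filter, Finset.filter_filter,
        fcomm (fun x : Fin m → ZMod 3 => ∑ j, v j * x j = 0)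
          (fun x : Fin m → ZMod 3 => hammingNorm x ≤ k),
        fcomm (fun x : Fin m → ZMod 3 => ∑ j, v j * x j = 0)
          (fun x : Fin m → ZMod 3 => ¬ (hammingNorm x ≤ k))]
    have hSpart : (univ.filter fun x : Fin m → ZMod 3 => hammingNorm x ≤ k).card
        = (univ.filter fun x : Fin m → ZMod 3 =>
            hammingNorm x ≤ k ∧ ∑ j, v j * x j = 0).card
          + (univ.filter fun x : Fin m → ZMod 3 =>
            hammingNorm x ≤ k ∧ ∑ j, v j * x j = 1).card
          + (univ.filter fun x : Fin m → ZMod 3 =>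
            hammingNorm x ≤ k ∧ ∑ j, v j * x j = 2).card := by
      rw [card_partition_val (fun x => hammingNorm x ≤ k) v, zmod3_sum]
    have hBpart : (univ.filter fun x : Fin m → ZMod 3 => ¬ (hammingNorm x ≤ k)).card
        = (univ.filter fun x : Fin m → ZMod 3 =>
            ¬ (hammingNorm x ≤ k) ∧ ∑ j, v j * x j = 0).card
          + (univ.filter fun x : Fin m → ZMod 3 =>
            ¬ (hammingNorm x ≤ k) ∧ ∑ j, v j * x j = 1).card
          + (univ.filter fun x : Fin m → ZMod 3 =>
            ¬ (hammingNorm x ≤ k) ∧ ∑ j, v j * x j = 2).card := by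
      rw [card_partition_val (fun x => ¬ (hammingNorm x ≤ k)) v, zmod3_sum]
    have hcompl : (univ.filter fun x : Fin m → ZMod 3 => hammingNorm x ≤ k).card
        + (univ.filter fun x : Fin m → ZMod 3 => ¬ (hammingNorm x ≤ k)).card = 3 ^ m := by
      rw [Finset.card_filter_add_card_filter_not, card_univ_fun]
    have hS := card_wt_le_eq m k
    have hL : ((univ.filter fun x : Fin m → ZMod 3 =>
          hammingNorm x ≤ k ∧ ∑ j, v j * x j = 0).card : ℤ)
        - (univ.filter fun x : Fin m → ZMod 3 =>
          hammingNorm x ≤ k ∧ ∑ j, v j * x j = 1).card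
        = lloyd k (hammingNorm v) m := by
      rw [card_wt_le (fun x : Fin m → ZMod 3 => ∑ j, v j * x j = 0),
        card_wt_le (fun x : Fin m → ZMod 3 => ∑ j, v j * x j = 1)]
      push_cast
      rw [← Finset.sum_sub_distrib, lloyd]
      refine Finset.sum_congr rfl fun t _ => ?_
      exact key m v t
    have hucase : -u = 1 ∨ -u = 2 := by
      have h' : ∀ w : ZMod 3, w ≠ 0 → -w = 1 ∨ -w = 2 := by decide
      exact h' u hu
    have hBu : (univ.filter fun x : Fin m → ZMod 3 =>
          ¬ (hammingNorm x ≤ k) ∧ ∑ j, v j * x j = -u).card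
        = (univ.filter fun x : Fin m → ZMod 3 =>
          ¬ (hammingNorm x ≤ k) ∧ ∑ j, v j * x j = 1).card := by
      rcases hucase with h | h
      · rw [h]
      · rw [h]; exact hB12.symm
    rw [hBu] at hsplitZ
    set a0 := (univ.filter fun x : Fin m → ZMod 3 =>
      hammingNorm x ≤ k ∧ ∑ j, v j * x j = 0).card with ha0
    set a1 := (univ.filter fun x : Fin m → ZMod 3 =>
      hammingNorm x ≤ k ∧ ∑ j, v j * x j = 1).card with ha1
    set a2 := (univ.filter fun x : Fin m → ZMod 3 =>
      hammingNorm x ≤ k ∧ ∑ j, v j * x j = 2).card with ha2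
    set b0 := (univ.filter fun x : Fin m → ZMod 3 =>
      ¬ (hammingNorm x ≤ k) ∧ ∑ j, v j * x j = 0).card with hb0
    set b1 := (univ.filter fun x : Fin m → ZMod 3 =>
      ¬ (hammingNorm x ≤ k) ∧ ∑ j, v j * x j = 1).card with hb1
    set b2 := (univ.filter fun x : Fin m → ZMod 3 =>
      ¬ (hammingNorm x ≤ k) ∧ ∑ j, v j * x j = 2).card with hb2
    set zc := (univ.filter fun x : Fin m → ZMod 3 =>
      u * gbar k x + ∑ j, v j * x j = 0).card with hzc
    set znc := (univ.filter fun x : Fin m → ZMod 3 =>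
      ¬ (u * gbar k x + ∑ j, v j * x j = 0)).card with hznc
    set wl := (univ.filter fun x : Fin m → ZMod 3 => hammingNorm x ≤ k).card with hwl
    set wg := (univ.filter fun x : Fin m → ZMod 3 => ¬ (hammingNorm x ≤ k)).card with hwg
    zify at hZ hsplitZ hAB0 hSpart hBpart hcompl hA12 hB12
    linarith
  · -- part (b)
    intro u hu
    have hiff : ∀ x ∈ (univ : Finset (Fin m → ZMod 3)),
        (x ≠ 0 ∧ u * gbar k x + ∑ j, (0 : Fin m → ZMod 3) j * x j ≠ 0)
          ↔ ¬ (hammingNorm x ≤ k) := by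
      intro x _
      simp only [Pi.zero_apply, zero_mul, Finset.sum_const_zero, add_zero]
      constructor
      · rintro ⟨-, h2⟩ hle
        apply h2
        simp only [gbar]
        rw [if_neg (not_lt.mpr hle), mul_zero]
      · intro h
        refine ⟨?_, ?_⟩
        · rintro rfl
          exact h (by rw [hammingNorm_zero]; exact Nat.zero_le k)
        · simp only [gbar]
          rw [if_pos (not_le.mp h), mul_one]
          exact hu
    rw [cwWeight, Finset.filter_congr hiff]
    have hcompl : (univ.filter fun x : Fin m → ZMod 3 => hammingNorm x ≤ k).card
        + (univ.filter fun x : Fin m → ZMod 3 => ¬ (hammingNorm x ≤ k)).card = 3 ^ m := by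
      rw [Finset.card_filter_add_card_filter_not, card_univ_fun]
    have hS := card_wt_le_eq m k
    set wl := (univ.filter fun x : Fin m → ZMod 3 => hammingNorm x ≤ k).card with hwl
    set wg := (univ.filter fun x : Fin m → ZMod 3 => ¬ (hammingNorm x ≤ k)).card with hwg
    zify at hcompl
    linarith
  · -- part (c)
    intro v hv
    have hiff : ∀ x ∈ (univ : Finset (Fin m → ZMod 3)),
        (x ≠ 0 ∧ (0 : ZMod 3) * gbar k x + ∑ j, v j * x j ≠ 0)
          ↔ ¬ (∑ j, v j * x j = 0) := by
      intro x _
      simp only [zero_mul, zero_add]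
      constructor
      · exact fun h => h.2
      · intro h
        refine ⟨?_, h⟩
        rintro rfl
        exact h (by simp)
    rw [cwWeight, Finset.filter_congr hiff]
    have hT := card_dot_eq hm1 v hv 0
    have hcompl : (univ.filter fun x : Fin m → ZMod 3 => ∑ j, v j * x j = 0).card
        + (univ.filter fun x : Fin m → ZMod 3 => ¬ (∑ j, v j * x j = 0)).card = 3 ^ m := by
      rw [Finset.card_filter_add_card_filter_not, card_univ_fun]
    set t0 := (univ.filter fun x : Fin m → ZMod 3 => ∑ j, v j * x j = 0).card with ht0
    set tn := (univ.filter fun x : Fin m → ZMod 3 => ¬ (∑ j, v j * x j = 0)).card with htn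
    zify at hcompl hT
    linarith
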